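/- Let d ≥ 2 and let K be a group of bijective isometries of X_d = ℕ → Fin d with the property that for all k_0, …, k_{d−1} ∈ K the transformation of X_d sending i⌢x to i⌢(k_i x) (for each letter i ∈ Fin d and each x ∈ X_d) again belongs to K. Let χ₁(K) = {μ_d(Fix(k)) : k ∈ K} ⊆ [0,1]. Then for any r_0, …, r_{d−1} ∈ χ₁(K), the average (1/d)·(r_0 + ⋯ + r_{d−1}) belongs to χ₁(K). Moreover, if K is a subgroup of a group G of bijective isometries of X_d, then χ₁(K) ⊆ χ₁(G). -/

import Mathlib

open Set MeasureTheory TopologicalSpace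

noncomputable section

/-- The boundary of the `d`-regular rooted tree: infinite words over a `d`-letter alphabet. -/
abbrev XX (d : ℕ) : Type := ℕ → Fin d

/-- The standard ultrametric: `dist x y = (1/2)^n` where `n` is the first index where `x,y`
differ. -/
noncomputable instance XXms (d : ℕ) : MetricSpace (XX d) := PiNat.metricSpace

/-- The cylinder determined by a finite word `w`: all infinite words starting with `w`. -/
def Cyl {d : ℕ} (w : List (Fin d)) : Set (XX d) :=
  {x | ∀ i : Fin w.length, x i.1 = w.get i}

/-- `G` acts transitively on every level of the tree. -/
def LevelTransitive {d : ℕ} (G : Subgroup (XX d ≃ᵢ XX d)) : Prop :=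
  ∀ u v : List (Fin d), u.length = v.length →
    ∃ g ∈ G, (g : XX d ≃ᵢ XX d) '' Cyl u = Cyl v

/-- The rigid stabilizer of the vertex (finite word) `v`: elements of `G` supported in
`Cyl v`. -/
def rist {d : ℕ} (G : Subgroup (XX d ≃ᵢ XX d)) (v : List (Fin d)) :
    Set (XX d ≃ᵢ XX d) :=
  {g | g ∈ G ∧ ∀ x : XX d, g x ≠ x → x ∈ Cyl v}

/-- The rigid stabilizer of level `n`: the subgroup generated by the rigid stabilizers of
all vertices of level `n`. -/
def ristLevel {d : ℕ} (G : Subgroup (XX d ≃ᵢ XX d)) (n : ℕ) :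
    Subgroup (XX d ≃ᵢ XX d) :=
  Subgroup.closure (⋃ v ∈ {w : List (Fin d) | w.length = n}, rist G v)

/-- A weakly branch group: level-transitive with all rigid vertex stabilizers nontrivial. -/
def WeaklyBranch {d : ℕ} (G : Subgroup (XX d ≃ᵢ XX d)) : Prop :=
  LevelTransitive G ∧ ∀ v : List (Fin d), ∃ g ∈ rist G v, g ≠ 1

/-- A branch group: weakly branch and every rigid level stabilizer has finite index. -/
def Branch {d : ℕ} (G : Subgroup (XX d ≃ᵢ XX d)) : Prop :=
  WeaklyBranch G ∧ ∀ n : ℕ, (ristLevel G n).index ≠ 0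

/-- The infinite word with first letter `i` followed by `x` (`i⌢x`). -/
def consW {d : ℕ} (i : Fin d) (x : XX d) : XX d :=
  fun n => Nat.casesOn n i x

/-- The set of values `μ(Fix k)`, `k ∈ K`. -/
def chiSet {d : ℕ} (μ : Measure (XX d)) (K : Subgroup (XX d ≃ᵢ XX d)) : Set ℝ :=
  {t : ℝ | ∃ g ∈ K, (μ {x : XX d | (g : XX d ≃ᵢ XX d) x = x}).toReal = t}

namespace Aux14

variable {d : ℕ}

lemma cyl_nil : Cyl ([] : List (Fin d)) = univ :=
  eq_univ_iff_forall.mpr (fun _ i => absurd i.2 (Nat.not_lt_zero _))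

lemma mem_cyl_cons {j : Fin d} {t : List (Fin d)} {x : XX d} :
    x ∈ Cyl (j :: t) ↔ x 0 = j ∧ (fun n => x (n + 1)) ∈ Cyl t := by
  constructor
  · intro h
    refine ⟨h ⟨0, by simp⟩, fun i => ?_⟩
    have := h ⟨i.1 + 1, by simpa using Nat.succ_lt_succ i.2⟩
    simpa using this
  · rintro ⟨h0, h⟩ i
    rcases i with ⟨_ | n, hn⟩
    · exact h0
    · exact h ⟨n, by simpa using Nat.lt_of_succ_lt_succ hn⟩

lemma mem_cyl_single {i : Fin d} {x : XX d} : x ∈ Cyl [i] ↔ x 0 = i := by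
  rw [mem_cyl_cons, cyl_nil]; simp

lemma measurableSet_cyl (w : List (Fin d)) : MeasurableSet (Cyl w) := by
  have : Cyl w = ⋂ i : Fin w.length, (fun x : XX d => x i.1) ⁻¹' {w.get i} := by
    ext x; simp [Cyl]
  rw [this]
  exact MeasurableSet.iInter fun i =>
    (measurable_pi_apply i.1) (measurableSet_singleton _)

lemma mem_cyl_ofFn {m : ℕ} (f : Fin m → Fin d) (x : XX d) :
    x ∈ Cyl (List.ofFn f) ↔ ∀ i : Fin m, x i.1 = f i := by
  constructor
  · intro h i
    have := h (Fin.cast (by simp) i)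
    simpa [List.get_ofFn] using this
  · intro h i
    have := h (Fin.cast (by simp) i)
    simp [List.get_ofFn] at this ⊢
    exact this

lemma isPiSystem_cyl : IsPiSystem {s : Set (XX d) | ∃ w : List (Fin d), Cyl w = s} := by
  rintro _ ⟨u, rfl⟩ _ ⟨v, rfl⟩ ⟨x, hxu, hxv⟩
  wlog hle : u.length ≤ v.length generalizing u v
  · rw [Set.inter_comm]; exact this v u hxv hxu (le_of_not_ge hle)
  refine ⟨v, ?_⟩
  have hsub : Cyl v ⊆ Cyl u := by
    intro y hy i
    have hx1 := hxu i
    have hx2 := hxv ⟨i.1, lt_of_lt_of_le i.2 hle⟩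
    have hy2 := hy ⟨i.1, lt_of_lt_of_le i.2 hle⟩
    rw [hy2, ← hx2, hx1]
  exact (Set.inter_eq_right.2 hsub).symm ▸ (Set.inter_eq_right.2 hsub)

lemma eventSet_eq (n : ℕ) (j : Fin d) :
    {x : XX d | x n = j} = ⋃ f : Fin n → Fin d, Cyl (List.ofFn (Fin.snoc f j)) := by
  ext x
  simp only [Set.mem_setOf_eq, Set.mem_iUnion]
  constructor
  · intro h
    refine ⟨fun i => x i.1, ?_⟩
    rw [mem_cyl_ofFn]
    intro i
    refine Fin.lastCases ?_ (fun i => ?_) i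
    · simpa using h
    · simp [Fin.snoc_castSucc]
  · rintro ⟨f, hf⟩
    rw [mem_cyl_ofFn] at hf
    have := hf (Fin.last n)
    simpa using this

lemma pi_eq_generateFrom :
    (inferInstance : MeasurableSpace (XX d)) =
      MeasurableSpace.generateFrom {s : Set (XX d) | ∃ w : List (Fin d), Cyl w = s} := by
  apply le_antisymm
  · rw [show (inferInstance : MeasurableSpace (XX d)) = MeasurableSpace.pi from rfl]
    refine iSup_le fun n => ?_
    have hm : @Measurable _ _ (MeasurableSpace.generateFrom
        {s : Set (XX d) | ∃ w : List (Fin d), Cyl w = s}) _ (fun x : XX d => x n) := by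
      intro t _
      have : (fun x : XX d => x n) ⁻¹' t = ⋃ j ∈ t, {x : XX d | x n = j} := by
        ext x; simp
      rw [this]
      refine MeasurableSet.biUnion t.to_countable fun j _ => ?_
      rw [eventSet_eq]
      exact MeasurableSet.iUnion fun f =>
        MeasurableSpace.measurableSet_generateFrom ⟨_, rfl⟩
    exact measurable_iff_comap_le.mp hm
  · exact MeasurableSpace.generateFrom_le (by rintro _ ⟨w, rfl⟩; exact measurableSet_cyl w)

lemma measurable_consW (i : Fin d) : Measurable (consW (d := d) i) := by
  rw [measurable_pi_iff]
  intro n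
  cases n with
  | zero => exact measurable_const
  | succ m => exact measurable_pi_apply m

lemma consW_tail (x : XX d) : consW (x 0) (fun n => x (n + 1)) = x := by
  funext n; cases n <;> rfl

lemma consW_preimage_cyl_cons (i j : Fin d) (t : List (Fin d)) :
    consW (d := d) i ⁻¹' Cyl (j :: t) = if j = i then Cyl t else ∅ := by
  ext x
  simp only [Set.mem_preimage, mem_cyl_cons]
  have h0 : consW i x 0 = i := rfl
  have ht : (fun n => consW i x (n + 1)) = x := rfl
  rw [h0, ht]
  by_cases h : j = i
  · simp [h]
  · simp only [h, if_false, Set.mem_empty_iff_false, iff_false, not_and]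
    intro h'; exact absurd h'.symm h

lemma cyl_cons_subset (j : Fin d) (t : List (Fin d)) : Cyl (j :: t) ⊆ Cyl [j] := by
  intro x hx
  rw [mem_cyl_single]
  exact (mem_cyl_cons.mp hx).1

lemma cyl_cons_inter_single (i j : Fin d) (t : List (Fin d)) :
    Cyl (j :: t) ∩ Cyl [i] = if j = i then Cyl (j :: t) else ∅ := by
  by_cases h : j = i
  · subst h; simp [Set.inter_eq_left.2 (cyl_cons_subset j t)]
  · simp only [h, if_false]
    ext x
    simp only [Set.mem_inter_iff, mem_cyl_single, mem_cyl_cons, Set.mem_empty_iff_false,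
      iff_false, not_and]
    rintro ⟨h1, -⟩ h2
    exact absurd (h1 ▸ h2 ▸ rfl) h

variable {μ : Measure (XX d)}

lemma map_consW (hd : 2 ≤ d)
    (hμ : ∀ w : List (Fin d), μ (Cyl w) = (1 / (d : ENNReal)) ^ w.length) (i : Fin d) :
    μ.map (consW i) = (d : ENNReal) • μ.restrict (Cyl [i]) := by
  have hd0 : (d : ENNReal) ≠ 0 := by
    simp; omega
  have hdt : (d : ENNReal) ≠ ⊤ := ENNReal.natCast_ne_top d
  have huniv : μ univ = 1 := by
    have := hμ []
    rw [cyl_nil] at this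
    simpa using this
  have hfin : IsFiniteMeasure μ := ⟨by rw [huniv]; exact ENNReal.one_lt_top⟩
  have hcancel : (d : ENNReal) * (1 / (d : ENNReal)) = 1 := by
    rw [one_div, ENNReal.mul_inv_cancel hd0 hdt]
  refine ext_of_generate_finite _ pi_eq_generateFrom isPiSystem_cyl ?_ ?_
  · rintro _ ⟨w, rfl⟩
    rw [Measure.map_apply (measurable_consW i) (measurableSet_cyl w)]
    rw [Measure.smul_apply, Measure.restrict_apply (measurableSet_cyl w)]
    cases w with
    | nil =>
      rw [cyl_nil, Set.preimage_univ, Set.univ_inter, huniv, hμ, smul_eq_mul]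
      simp only [List.length_cons, List.length_nil, zero_add, pow_one]
      exact hcancel.symm
    | cons j t =>
      rw [consW_preimage_cyl_cons, cyl_cons_inter_single]
      by_cases h : j = i
      · simp only [h, if_true]
        rw [hμ, hμ, smul_eq_mul]
        simp only [List.length_cons, pow_succ]
        rw [← mul_assoc, mul_comm (d : ENNReal), mul_assoc, hcancel, mul_one]
      · simp [h]
  · rw [Measure.map_apply (measurable_consW i) MeasurableSet.univ, Set.preimage_univ, huniv,
      Measure.smul_apply, Measure.restrict_apply MeasurableSet.univ, Set.univ_inter, hμ,
      smul_eq_mul]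
    simp only [List.length_singleton, pow_one]
    exact hcancel.symm

lemma measurableSet_consW_image (i : Fin d) {S : Set (XX d)} (hS : MeasurableSet S) :
    MeasurableSet (consW (d := d) i '' S) := by
  have himg : consW (d := d) i '' S = Cyl [i] ∩ (fun x : XX d => fun n => x (n + 1)) ⁻¹' S := by
    ext x
    constructor
    · rintro ⟨y, hy, rfl⟩
      exact ⟨mem_cyl_single.mpr rfl, hy⟩
    · rintro ⟨h1, h2⟩
      refine ⟨fun n => x (n + 1), h2, ?_⟩
      rw [← mem_cyl_single.mp h1]
      exact consW_tail x
  rw [himg]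
  exact (measurableSet_cyl [i]).inter
    ((measurable_pi_iff.mpr fun n => measurable_pi_apply (n + 1)) hS)

lemma consW_injective (i : Fin d) : Function.Injective (consW (d := d) i) := by
  intro a b h
  funext n
  exact congrFun h (n + 1)

lemma measure_consW_image (hd : 2 ≤ d)
    (hμ : ∀ w : List (Fin d), μ (Cyl w) = (1 / (d : ENNReal)) ^ w.length) (i : Fin d)
    {S : Set (XX d)} (hS : MeasurableSet S) :
    μ (consW i '' S) = (1 / (d : ENNReal)) * μ S := by
  have hd0 : (d : ENNReal) ≠ 0 := by simp; omega
  have hdt : (d : ENNReal) ≠ ⊤ := ENNReal.natCast_ne_top d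
  have hA := measurableSet_consW_image i hS
  have h1 : (μ.map (consW i)) (consW i '' S) = μ S := by
    rw [Measure.map_apply (measurable_consW i) hA, Set.preimage_image_eq S (consW_injective i)]
  rw [map_consW hd hμ i] at h1
  have hsub : consW (d := d) i '' S ⊆ Cyl [i] := by
    rintro _ ⟨y, -, rfl⟩; exact mem_cyl_single.mpr rfl
  rw [Measure.smul_apply, Measure.restrict_apply hA, Set.inter_eq_left.2 hsub,
    smul_eq_mul] at h1
  rw [← h1, one_div, ← mul_assoc, ENNReal.inv_mul_cancel hd0 hdt, one_mul]

end Aux14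

open Aux14

/-- let `K` be a group of bijective isometries of `X_d` closed under the tuple
operation `(k_0,…,k_{d-1}) ↦ (i⌢x ↦ i⌢(k_i x))`. Then `χ₁(K) = {μ_d(Fix k) : k ∈ K}` is
closed under `d`-fold averages, and `χ₁(K) ⊆ χ₁(G)` whenever `K ≤ G`. -/
theorem stmt_14 (d : ℕ) (hd : 2 ≤ d) (K : Subgroup (XX d ≃ᵢ XX d))
    (μ : Measure (XX d))
    (hμ : ∀ w : List (Fin d), μ (Cyl w) = (1 / (d : ENNReal)) ^ w.length)
    (hK : ∀ k : Fin d → (XX d ≃ᵢ XX d), (∀ i, k i ∈ K) →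
      ∃ g ∈ K, ∀ (i : Fin d) (x : XX d),
        (g : XX d ≃ᵢ XX d) (consW i x) = consW i ((k i : XX d ≃ᵢ XX d) x)) :
    (∀ r : Fin d → ℝ, (∀ i, r i ∈ chiSet μ K) →
      (∑ i : Fin d, r i) / (d : ℝ) ∈ chiSet μ K) ∧
    (∀ G : Subgroup (XX d ≃ᵢ XX d), K ≤ G → chiSet μ K ⊆ chiSet μ G) := by
  have hFixMeas : ∀ h : XX d ≃ᵢ XX d, MeasurableSet {x : XX d | h x = x} := fun h =>
    (isClosed_eq h.continuous continuous_id).measurableSet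
  constructor
  · intro r hr
    choose k hkK hkr using hr
    obtain ⟨g, hgK, hg⟩ := hK k hkK
    refine ⟨g, hgK, ?_⟩
    have huniv : μ univ = 1 := by
      have := hμ []
      rw [cyl_nil] at this
      simpa using this
    have hfin : ∀ i, μ {y : XX d | (k i : XX d ≃ᵢ XX d) y = y} ≠ ⊤ := by
      intro i h
      have : μ {y : XX d | (k i : XX d ≃ᵢ XX d) y = y} ≤ μ univ :=
        measure_mono (Set.subset_univ _)
      rw [h, huniv] at this
      exact absurd this (by simp)
    have hdecomp : {x : XX d | (g : XX d ≃ᵢ XX d) x = x} =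
        ⋃ i : Fin d, consW i '' {y : XX d | (k i : XX d ≃ᵢ XX d) y = y} := by
      ext x
      simp only [Set.mem_setOf_eq, Set.mem_iUnion, Set.mem_image]
      constructor
      · intro hx
        refine ⟨x 0, fun n => x (n + 1), ?_, consW_tail x⟩
        have h1 := hg (x 0) (fun n => x (n + 1))
        rw [consW_tail x, hx] at h1
        apply consW_injective (x 0)
        rw [← h1, consW_tail]
      · rintro ⟨i, y, hy, rfl⟩
        rw [hg i y, hy]
    have hdisj : Pairwise (Function.onFun Disjoint
        fun i : Fin d => consW i '' {y : XX d | (k i : XX d ≃ᵢ XX d) y = y}) := by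
      intro i j hij
      simp only [Function.onFun]
      rw [Set.disjoint_left]
      rintro x ⟨y, -, rfl⟩ ⟨z, -, hz⟩
      exact hij (congrFun hz 0).symm
    have hmeas : ∀ i : Fin d,
        MeasurableSet (consW i '' {y : XX d | (k i : XX d ≃ᵢ XX d) y = y}) := fun i =>
      measurableSet_consW_image i (hFixMeas (k i))
    rw [hdecomp, measure_iUnion hdisj hmeas, tsum_fintype]
    have hterm : ∀ i : Fin d, μ (consW i '' {y : XX d | (k i : XX d ≃ᵢ XX d) y = y}) =
        (1 / (d : ENNReal)) * μ {y : XX d | (k i : XX d ≃ᵢ XX d) y = y} := fun i =>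
      measure_consW_image hd hμ i (hFixMeas (k i))
    simp only [hterm]
    rw [ENNReal.toReal_sum (fun i _ => by
      refine ENNReal.mul_ne_top ?_ (hfin i)
      simp [ENNReal.natCast_ne_top]
      exact fun h => by simp [h] at hd )]
    simp only [ENNReal.toReal_mul, hkr]
    rw [Finset.sum_div]
    congr 1
    funext i
    rw [ENNReal.toReal_div]
    simp [div_mul_eq_mul_div, inv_mul_eq_div]
  · rintro G hKG t ⟨g, hgK, hgt⟩
    exact ⟨g, hKG hgK, hgt⟩
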